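/- Let Q be a compact Hausdorff space, A ⊆ C(Q) a closed unital subalgebra, φ a character of A, and μ a representing probability measure for φ. Then supp μ is a set of antisymmetry for A: every f ∈ A which is real-valued on supp μ is constant on supp μ. -/

import Mathlib

open MeasureTheory

/-- The (topological) support of a Borel measure. -/
def measSupport {X : Type*} [TopologicalSpace X] [MeasurableSpace X]
    (μ : Measure X) : Set X :=
  {x | ∀ U : Set X, IsOpen U → x ∈ U → 0 < μ U}

lemma compl_measSupport_null {X : Type*} [TopologicalSpace X] [MeasurableSpace X]
    (μ : Measure X) [μ.Regular] : μ (measSupport μ)ᶜ = 0 := by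
  -- every point of the complement has a null open neighborhood
  have hmem : ∀ x : ↥((measSupport μ)ᶜ), ∃ U : Set X, IsOpen U ∧ (x : X) ∈ U ∧ μ U = 0 := by
    rintro ⟨x, hx⟩
    simp only [measSupport, Set.mem_compl_iff, Set.mem_setOf_eq, not_forall] at hx
    obtain ⟨U, hU, hxU, hμU⟩ := hx
    exact ⟨U, hU, hxU, le_antisymm (not_lt.mp hμU) zero_le⟩
  choose U hUopen hUmem hUnull using hmem
  have hVopen : IsOpen (measSupport μ)ᶜ := by
    rw [isOpen_iff_forall_mem_open]
    intro x hx
    refine ⟨U ⟨x, hx⟩, ?_, hUopen _, hUmem _⟩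
    intro y hy
    simp only [measSupport, Set.mem_compl_iff, Set.mem_setOf_eq, not_forall]
    exact ⟨U ⟨x, hx⟩, hUopen _, hy, by simp [hUnull]⟩
  by_contra hne
  have hpos : 0 < μ (measSupport μ)ᶜ := pos_iff_ne_zero.mpr hne
  obtain ⟨K, hKsub, hKcomp, hKpos⟩ :=
    MeasureTheory.Measure.Regular.innerRegular (μ := μ) hVopen 0 hpos
  -- cover K by the null open sets
  have hcover : K ⊆ ⋃ x : ↥((measSupport μ)ᶜ), U x := by
    intro z hz
    exact Set.mem_iUnion.mpr ⟨⟨z, hKsub hz⟩, hUmem _⟩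
  obtain ⟨t, ht⟩ := hKcomp.elim_finite_subcover U hUopen hcover
  have : μ K ≤ ∑ i ∈ t, μ (U i) := (measure_mono ht).trans (measure_biUnion_finset_le t U)
  simp only [hUnull, Finset.sum_const_zero, le_zero_iff] at this
  exact absurd this (pos_iff_ne_zero.mp hKpos).elim

/-- The support of a representing measure of a character of a closed unital subalgebra
`A ⊆ C(Q)` is a set of antisymmetry: every `f ∈ A` real-valued on `supp μ` is constant there. -/
theorem stmt_15 {Q : Type*} [TopologicalSpace Q] [CompactSpace Q] [T2Space Q]
    [MeasurableSpace Q] [BorelSpace Q]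
    (A : Subalgebra ℂ C(Q, ℂ)) (hA : IsClosed (A : Set C(Q, ℂ)))
    (φ : A →ₐ[ℂ] ℂ)
    (μ : Measure Q) [IsProbabilityMeasure μ] [μ.Regular]
    (hrep : ∀ f : A, φ f = ∫ x, (f : C(Q, ℂ)) x ∂μ) :
    ∀ f : A, (∀ x ∈ measSupport μ, ((f : C(Q, ℂ)) x).im = 0) →
      ∀ x ∈ measSupport μ, ∀ y ∈ measSupport μ,
        (f : C(Q, ℂ)) x = (f : C(Q, ℂ)) y := by
  intro f hf x hx y hy
  have hnull := compl_measSupport_null μ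
  have hint : ∀ h : C(Q, ℂ), Integrable (fun z => h z) μ := fun h =>
    MeasureTheory.integrableOn_univ.mp
      (h.continuous.continuousOn.integrableOn_compact isCompact_univ)
  -- a.e. the imaginary part of f vanishes
  have hfim : ∀ᵐ z ∂μ, ((f : C(Q, ℂ)) z).im = 0 := by
    refine measure_mono_null ?_ hnull
    intro z hz
    simp only [Set.mem_compl_iff, measSupport, Set.mem_setOf_eq]
    intro hzsupp
    exact hz (hf z hzsupp)
  -- φ f is real
  set c : ℂ := φ f with hc
  have hcim : c.im = 0 := by
    have h := integral_im (𝕜 := ℂ) (μ := μ) (hint (f : C(Q, ℂ)))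
    simp only [RCLike.im_to_complex] at h
    rw [hc, hrep f, ← h]
    rw [show (∫ z, ((f : C(Q, ℂ)) z).im ∂μ) = ∫ _z, (0 : ℝ) ∂μ from
      integral_congr_ae (hfim.mono fun z hz => hz)]
    simp
  -- the element g = f - c
  set g : A := f - algebraMap ℂ A c with hg
  have hgval : ∀ z, (g : C(Q, ℂ)) z = (f : C(Q, ℂ)) z - c := by
    intro z
    simp [hg, Subalgebra.algebraMap_eq]
  have hφg : φ g = 0 := by
    rw [hg, map_sub, AlgHom.commutes, hc]
    simp
  -- ∫ g² = φ(g²) = (φ g)² = 0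
  have hsq : (∫ z, ((g : C(Q, ℂ)) z) ^ 2 ∂μ) = 0 := by
    have h2 : φ (g * g) = 0 := by rw [map_mul, hφg, mul_zero]
    rw [hrep (g * g)] at h2
    rw [← h2]
    refine integral_congr_ae (Filter.Eventually.of_forall fun z => ?_)
    simp [sq]
  -- a.e., g is real
  have hgim : ∀ᵐ z ∂μ, ((g : C(Q, ℂ)) z).im = 0 := by
    filter_upwards [hfim] with z hz
    rw [hgval z]
    simp [hz, hcim]
  -- so a.e., g² = (Re g)² as a real number
  have hsqre : (∫ z, (((g : C(Q, ℂ)) z).re ^ 2 : ℝ) ∂μ) = 0 := by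
    have hintsq : Integrable (fun z => ((g : C(Q, ℂ)) z) ^ 2) μ :=
      (hint ((g * g : A) : C(Q, ℂ))).congr
        (Filter.Eventually.of_forall fun z => by simp [sq])
    have h := integral_re (𝕜 := ℂ) (μ := μ) hintsq
    rw [hsq] at h
    simp only [RCLike.re_to_complex, Complex.zero_re] at h
    rw [← h]
    refine integral_congr_ae ?_
    filter_upwards [hgim] with z hz
    simp [sq, Complex.mul_re, hz]
  have hintre : Integrable (fun z => (((g : C(Q, ℂ)) z).re ^ 2 : ℝ)) μ := by
    have hcont : Continuous fun z => (((g : C(Q, ℂ)) z).re ^ 2 : ℝ) :=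
      (Complex.continuous_re.comp (g : C(Q, ℂ)).continuous).pow 2
    exact MeasureTheory.integrableOn_univ.mp
      (hcont.continuousOn.integrableOn_compact isCompact_univ)
  have hre0 : ∀ᵐ z ∂μ, (((g : C(Q, ℂ)) z).re ^ 2 : ℝ) = 0 := by
    have := (integral_eq_zero_iff_of_nonneg (fun z => sq_nonneg _) hintre).mp hsqre
    filter_upwards [this] with z hz using hz
  have hg0 : ∀ᵐ z ∂μ, (g : C(Q, ℂ)) z = 0 := by
    filter_upwards [hre0, hgim] with z h1 h2
    exact Complex.ext (by simpa [pow_eq_zero_iff] using h1) (by simpa using h2)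
  -- g vanishes on the support of μ by continuity
  have hsupp : ∀ z ∈ measSupport μ, (g : C(Q, ℂ)) z = 0 := by
    intro z hz
    by_contra hne
    set N : Set Q := {w | (g : C(Q, ℂ)) w ≠ 0} with hN
    have hNopen : IsOpen N := isOpen_ne.preimage (g : C(Q, ℂ)).continuous
    have hNpos : 0 < μ N := hz N hNopen hne
    have hN0 : μ N = 0 := by
      have : μ {w | ¬ ((g : C(Q, ℂ)) w = 0)} = 0 := hg0
      exact this
    exact absurd hN0 (pos_iff_ne_zero.mp hNpos)
  have hx' := hsupp x hx
  have hy' := hsupp y hy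
  rw [hgval] at hx' hy'
  rw [sub_eq_zero.mp hx', sub_eq_zero.mp hy']
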